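/- arXiv:1805.00887 — 2 statements merged into one kernel-verified Lean document; each statement's English description precedes it below -/
import Mathlib

section
/- Let (X,d) be a compact metric space and 𝕀 = {S_1,...,S_N} an IFS of bi-Lipschitz contractions on X with homogeneous attractor F_∅ and upper Lipschitz dimension s. Then dim̄_B F_∅ ≤ s. -/
open Metric Filter Set MeasureTheory Topology

/-- The upper Lipschitz constant `Lip⁺(S) = sup_{x ≠ y} d(S x, S y)/d(x,y)`. -/
noncomputable def LipPlus {X : Type*} [MetricSpace X] (S : X → X) : ℝ :=
  sSup {r : ℝ | ∃ x y : X, x ≠ y ∧ r = dist (S x) (S y) / dist x y}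

/-- The lower Lipschitz constant `Lip⁻(S) = inf_{x ≠ y} d(S x, S y)/d(x,y)`. -/
noncomputable def LipMinus {X : Type*} [MetricSpace X] (S : X → X) : ℝ :=
  sInf {r : ℝ | ∃ x y : X, x ≠ y ∧ r = dist (S x) (S y) / dist x y}

/-- `S` is a bi-Lipschitz contraction: `0 < Lip⁻(S) ≤ Lip⁺(S) < 1`,
with `Lip⁺(S)` and `Lip⁻(S)` genuine upper/lower Lipschitz bounds. -/
def IsBiLipContraction {X : Type*} [MetricSpace X] (S : X → X) : Prop :=
  (∀ x y : X, dist (S x) (S y) ≤ LipPlus S * dist x y) ∧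
  (∀ x y : X, LipMinus S * dist x y ≤ dist (S x) (S y)) ∧
  0 < LipMinus S ∧ LipMinus S ≤ LipPlus S ∧ LipPlus S < 1

/-- `S_𝐢 = S_{i₁} ∘ ⋯ ∘ S_{i_k}` for a finite word `𝐢` over `{1,…,N}`. -/
def compList {X : Type*} {N : ℕ} (S : Fin N → X → X) : List (Fin N) → X → X
  | [] => id
  | i :: w => S i ∘ compList S w

/-- `N_δ(F)`: the smallest number of sets of diameter at most `δ` needed to cover `F`. -/
noncomputable def coverNum {X : Type*} [MetricSpace X] (F : Set X) (δ : ℝ) : ℕ :=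
  sInf {n : ℕ | ∃ 𝒰 : Finset (Set X), 𝒰.card = n ∧ (∀ U ∈ 𝒰, Metric.diam U ≤ δ) ∧ F ⊆ ⋃₀ ↑𝒰}

/-- Upper box dimension `dim̄_B F = limsup_{δ → 0⁺} log N_δ(F) / (-log δ)`. -/
noncomputable def ubDim {X : Type*} [MetricSpace X] (F : Set X) : ℝ :=
  Filter.limsup (fun δ : ℝ => Real.log (coverNum F δ) / (-Real.log δ)) (nhdsWithin 0 (Set.Ioi 0))

section Helpers

variable {X : Type*} [MetricSpace X]

lemma lipPlus_le' {S : X → X} {c : ℝ} (hc : 0 ≤ c)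
    (h : ∀ x y : X, dist (S x) (S y) ≤ c * dist x y) : LipPlus S ≤ c := by
  apply Real.sSup_le _ hc
  rintro r ⟨x, y, hxy, rfl⟩
  rw [div_le_iff₀ (dist_pos.2 hxy)]
  exact h x y

lemma bddAbove_ratios' {S : X → X} {c : ℝ}
    (h : ∀ x y : X, dist (S x) (S y) ≤ c * dist x y) :
    BddAbove {r : ℝ | ∃ x y : X, x ≠ y ∧ r = dist (S x) (S y) / dist x y} := by
  refine ⟨c, ?_⟩
  rintro r ⟨x, y, hxy, rfl⟩
  rw [div_le_iff₀ (dist_pos.2 hxy)]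
  exact h x y

lemma dist_le_lipPlus_mul' {S : X → X} {c : ℝ}
    (h : ∀ x y : X, dist (S x) (S y) ≤ c * dist x y) (x y : X) :
    dist (S x) (S y) ≤ LipPlus S * dist x y := by
  rcases eq_or_ne x y with rfl | hxy
  · simp
  · rw [← div_le_iff₀ (dist_pos.2 hxy)]
    exact le_csSup (bddAbove_ratios' h) ⟨x, y, hxy, rfl⟩

lemma le_lipPlus' {S : X → X} {c m : ℝ}
    (h : ∀ x y : X, dist (S x) (S y) ≤ c * dist x y)
    (hm : ∀ x y : X, m * dist x y ≤ dist (S x) (S y)) {x y : X} (hxy : x ≠ y) :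
    m ≤ LipPlus S := by
  have h1 : m ≤ dist (S x) (S y) / dist x y := (le_div_iff₀ (dist_pos.2 hxy)).2 (hm x y)
  exact h1.trans (le_csSup (bddAbove_ratios' h) ⟨x, y, hxy, rfl⟩)

variable {N : ℕ} {S : Fin N → X → X}

lemma compList_dist_le' (hS : ∀ i, IsBiLipContraction (S i)) (l : List (Fin N)) (x y : X) :
    dist (compList S l x) (compList S l y) ≤ (l.map fun i => LipPlus (S i)).prod * dist x y := by
  induction l with
  | nil => simp [compList]
  | cons i w ih =>
    simp only [compList, List.map_cons, List.prod_cons, Function.comp_apply]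
    calc dist (S i (compList S w x)) (S i (compList S w y))
        ≤ LipPlus (S i) * dist (compList S w x) (compList S w y) := (hS i).1 _ _
      _ ≤ LipPlus (S i) * ((w.map fun i => LipPlus (S i)).prod * dist x y) := by
          apply mul_le_mul_of_nonneg_left ih
          exact le_trans (hS i).2.2.1.le ((hS i).2.2.2.1)
      _ = _ := by ring

lemma compList_le_dist' (hS : ∀ i, IsBiLipContraction (S i)) (l : List (Fin N)) (x y : X) :
    (l.map fun i => LipMinus (S i)).prod * dist x y ≤ dist (compList S l x) (compList S l y) := by
  induction l with
  | nil => simp [compList]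
  | cons i w ih =>
    simp only [compList, List.map_cons, List.prod_cons, Function.comp_apply]
    calc LipMinus (S i) * (w.map fun i => LipMinus (S i)).prod * dist x y
        = LipMinus (S i) * ((w.map fun i => LipMinus (S i)).prod * dist x y) := by ring
      _ ≤ LipMinus (S i) * dist (compList S w x) (compList S w y) :=
          mul_le_mul_of_nonneg_left ih (hS i).2.2.1.le
      _ ≤ _ := (hS i).2.1 _ _

lemma prodPlus_pos' (hS : ∀ i, IsBiLipContraction (S i)) (l : List (Fin N)) :
    0 < (l.map fun i => LipPlus (S i)).prod := by
  apply List.prod_pos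
  intro a ha
  simp only [List.mem_map] at ha
  obtain ⟨i, _, rfl⟩ := ha
  exact lt_of_lt_of_le (hS i).2.2.1 (hS i).2.2.2.1

lemma prodMinus_pos' (hS : ∀ i, IsBiLipContraction (S i)) (l : List (Fin N)) :
    0 < (l.map fun i => LipMinus (S i)).prod := by
  apply List.prod_pos
  intro a ha
  simp only [List.mem_map] at ha
  obtain ⟨i, _, rfl⟩ := ha
  exact (hS i).2.2.1

lemma prodPlus_lt_one' (hS : ∀ i, IsBiLipContraction (S i)) (l : List (Fin N)) (hl : l ≠ []) :
    (l.map fun i => LipPlus (S i)).prod < 1 := by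
  induction l with
  | nil => exact absurd rfl hl
  | cons i w ih =>
    simp only [List.map_cons, List.prod_cons]
    rcases eq_or_ne w [] with rfl | hw
    · simpa using (hS i).2.2.2.2
    · calc LipPlus (S i) * (w.map fun i => LipPlus (S i)).prod
          < 1 * 1 := by
            apply mul_lt_mul' (hS i).2.2.2.2.le (ih hw) (prodPlus_pos' hS w).le one_pos
      _ = 1 := by ring

lemma coverSet_nonempty' [CompactSpace X] (F : Set X) {δ : ℝ}
    (hδ : 0 < δ) :
    {n : ℕ | ∃ 𝒰 : Finset (Set X), 𝒰.card = n ∧ (∀ U ∈ 𝒰, Metric.diam U ≤ δ) ∧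
      F ⊆ ⋃₀ ↑𝒰}.Nonempty := by
  classical
  obtain ⟨t, -, htfin, hcov⟩ :=
    isCompact_univ.finite_cover_balls (X := X) (half_pos hδ)
  refine ⟨(htfin.toFinset.image fun x => ball x (δ / 2)).card,
    htfin.toFinset.image fun x => ball x (δ / 2), rfl, ?_, ?_⟩
  · intro U hU
    simp only [Finset.mem_image] at hU
    obtain ⟨x, -, rfl⟩ := hU
    calc diam (ball x (δ / 2)) ≤ 2 * (δ / 2) := diam_ball (half_pos hδ).le
      _ = δ := by ring
  · intro x hx
    have := hcov (mem_univ x)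
    simp only [mem_iUnion] at this
    obtain ⟨y, hy, hxy⟩ := this
    exact ⟨ball y (δ / 2), by simp only [Finset.coe_image, Set.mem_image]; exact
      ⟨y, by simpa using hy, rfl⟩, hxy⟩

lemma one_le_coverNum' [CompactSpace X] {F : Set X}
    (hF : F.Nonempty) {δ : ℝ} (hδ : 0 < δ) : 1 ≤ coverNum F δ := by
  have hmem : ∃ 𝒰 : Finset (Set X), 𝒰.card = coverNum F δ ∧
      (∀ U ∈ 𝒰, Metric.diam U ≤ δ) ∧ F ⊆ ⋃₀ ↑𝒰 :=
    Nat.sInf_mem (coverSet_nonempty' F hδ)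
  obtain ⟨𝒰, hcard, -, hcov⟩ := hmem
  rw [Nat.one_le_iff_ne_zero]
  intro h0
  rw [h0, Finset.card_eq_zero] at hcard
  subst hcard
  obtain ⟨x, hx⟩ := hF
  simpa using hcov hx

lemma coverNum_le_one' {F : Set X} {δ : ℝ}
    (h : Metric.diam F ≤ δ) : coverNum F δ ≤ 1 := by
  apply Nat.sInf_le
  exact ⟨{F}, Finset.card_singleton F, by simpa using h, by simp⟩

lemma attractor_decomp' {F0 : Set X}
    (hF0 : F0 = ⋃ i, S i '' F0) (m : ℕ) :
    F0 ⊆ ⋃ w : Fin m → Fin N, compList S (List.ofFn w) '' F0 := by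
  induction m with
  | zero =>
    intro x hx
    refine mem_iUnion.2 ⟨fun i => i.elim0, ⟨x, hx, ?_⟩⟩
    simp [compList]
  | succ m ih =>
    intro x hx
    rw [hF0] at hx
    obtain ⟨i, y, hy, rfl⟩ := by simpa only [mem_iUnion] using hx
    obtain ⟨w, z, hz, rfl⟩ := by simpa only [mem_iUnion] using ih hy
    refine mem_iUnion.2 ⟨Fin.cons i w, ⟨z, hz, ?_⟩⟩
    rw [List.ofFn_succ]
    simp [compList, Fin.cons_succ]

lemma coverNum_recursion' [CompactSpace X]
    {F0 : Set X} {ι : Type*} [Fintype ι] (T : ι → X → X) (L : ι → ℝ)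
    (hLpos : ∀ w, 0 < L w)
    (hLip : ∀ w x y, dist (T w x) (T w y) ≤ L w * dist x y)
    (hdec : F0 ⊆ ⋃ w, T w '' F0) {δ : ℝ} (hδ : 0 < δ) :
    coverNum F0 δ ≤ ∑ w : ι, coverNum F0 (δ / L w) := by
  classical
  have hex : ∀ w : ι, ∃ 𝒰 : Finset (Set X), 𝒰.card = coverNum F0 (δ / L w) ∧
      (∀ U ∈ 𝒰, Metric.diam U ≤ δ / L w) ∧ F0 ⊆ ⋃₀ ↑𝒰 :=
    fun w => Nat.sInf_mem (coverSet_nonempty' F0 (div_pos hδ (hLpos w)))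
  choose 𝒰 hcard hdiam hcov using hex
  set 𝒱 : Finset (Set X) :=
    Finset.univ.biUnion (fun w => (𝒰 w).image (fun U => T w '' U)) with h𝒱
  have hmem : coverNum F0 δ ≤ 𝒱.card := by
    apply Nat.sInf_le
    refine ⟨𝒱, rfl, ?_, ?_⟩
    · intro V hV
      simp only [h𝒱, Finset.mem_biUnion, Finset.mem_image] at hV
      obtain ⟨w, -, U, hU, rfl⟩ := hV
      apply Metric.diam_le_of_forall_dist_le hδ.le
      rintro a ⟨x, hx, rfl⟩ b ⟨y, hy, rfl⟩
      calc dist (T w x) (T w y) ≤ L w * dist x y := hLip w x y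
        _ ≤ L w * diam U := by
            apply mul_le_mul_of_nonneg_left _ (hLpos w).le
            exact Metric.dist_le_diam_of_mem
              (isBounded_of_compactSpace) hx hy
        _ ≤ L w * (δ / L w) := mul_le_mul_of_nonneg_left (hdiam w U hU) (hLpos w).le
        _ = δ := by rw [mul_comm, div_mul_cancel₀ _ (hLpos w).ne']
    · intro x hx
      obtain ⟨w, y, hy, rfl⟩ := by simpa only [mem_iUnion] using hdec hx
      obtain ⟨U, hU, hyU⟩ := hcov w hy
      refine ⟨T w '' U, ?_, ⟨y, hyU, rfl⟩⟩
      simp only [h𝒱, Finset.coe_biUnion, Finset.coe_image, mem_iUnion]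
      exact ⟨w, Finset.mem_univ w, mem_image_of_mem _ (by exact_mod_cast hU)⟩
  calc coverNum F0 δ ≤ 𝒱.card := hmem
    _ ≤ ∑ w : ι, ((𝒰 w).image (fun U => T w '' U)).card := Finset.card_biUnion_le
    _ ≤ ∑ w : ι, (𝒰 w).card := Finset.sum_le_sum fun w _ => Finset.card_image_le
    _ = ∑ w : ι, coverNum F0 (δ / L w) := by simp [hcard]

lemma main_claim' [CompactSpace X]
    {F0 : Set X} {ι : Type*} [Fintype ι] (T : ι → X → X) (L : ι → ℝ)
    (hLpos : ∀ w, 0 < L w)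
    (hLip : ∀ w x y, dist (T w x) (T w y) ≤ L w * dist x y)
    (hdec : F0 ⊆ ⋃ w, T w '' F0)
    {cmin rmax t : ℝ} (hcminpos : 0 < cmin)
    (hcmin : ∀ w, cmin ≤ L w) (hrmax : ∀ w, L w ≤ rmax)
    (ht : 0 ≤ t) (hsum : ∑ w : ι, L w ^ t = 1)
    (hdF : 0 < Metric.diam F0) :
    ∀ n : ℕ, ∀ δ : ℝ, 0 < δ → rmax ^ n * Metric.diam F0 ≤ δ →
      (coverNum F0 δ : ℝ) ≤ max 1 ((Metric.diam F0 / (cmin * δ)) ^ t) := by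
  have hrmaxpos : 0 < rmax := by
    obtain ⟨w⟩ := Classical.inhabited_of_nonempty
      (Fintype.card_pos_iff.1 (by
        by_contra h
        push_neg at h
        interval_cases h' : Fintype.card ι
        · rw [Fintype.card_eq_zero_iff] at h'
          rw [Finset.univ_eq_empty, Finset.sum_empty] at hsum
          norm_num at hsum))
    exact lt_of_lt_of_le (hcminpos.trans_le (hcmin w)) (hrmax w)
  intro n
  induction n with
  | zero =>
    intro δ hδ hsc
    rw [pow_zero, one_mul] at hsc
    calc (coverNum F0 δ : ℝ) ≤ 1 := by exact_mod_cast coverNum_le_one' hsc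
      _ ≤ _ := le_max_left _ _
  | succ n ih =>
    intro δ hδ hsc
    rcases le_or_gt (Metric.diam F0) δ with hbase | hlt
    · calc (coverNum F0 δ : ℝ) ≤ 1 := by exact_mod_cast coverNum_le_one' hbase
        _ ≤ _ := le_max_left _ _
    · -- inductive case : δ < dF
      set dF := Metric.diam F0 with hdFdef
      have hrec := coverNum_recursion' T L hLpos hLip hdec hδ
      have hbpos : 0 < dF / (cmin * δ) := div_pos hdF (mul_pos hcminpos hδ)
      have hstep : ∀ w : ι, (coverNum F0 (δ / L w) : ℝ) ≤ (dF / (cmin * δ)) ^ t * L w ^ t := by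
        intro w
        have hδL : 0 < δ / L w := div_pos hδ (hLpos w)
        have hscale : rmax ^ n * dF ≤ δ / L w := by
          rw [le_div_iff₀ (hLpos w)]
          calc rmax ^ n * dF * L w ≤ rmax ^ n * dF * rmax :=
              mul_le_mul_of_nonneg_left (hrmax w)
                (mul_nonneg (pow_nonneg hrmaxpos.le n) hdF.le)
            _ = rmax ^ (n + 1) * dF := by ring
            _ ≤ δ := hsc
        have h1 : (coverNum F0 (δ / L w) : ℝ) ≤ max 1 ((dF / (cmin * (δ / L w))) ^ t) :=
          ih (δ / L w) hδL hscale
        have heq : dF / (cmin * (δ / L w)) = dF / (cmin * δ) * L w := by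
          field_simp
        have hge1 : (1 : ℝ) ≤ dF / (cmin * (δ / L w)) := by
          rw [heq]
          have h3 : dF / (cmin * δ) * cmin ≤ dF / (cmin * δ) * L w :=
            mul_le_mul_of_nonneg_left (hcmin w) hbpos.le
          have h4 : dF / (cmin * δ) * cmin = dF / δ := by
            field_simp
          refine le_trans ?_ (h4 ▸ h3)
          rw [le_div_iff₀ hδ, one_mul]
          exact hlt.le
        have hmaxeq : max 1 ((dF / (cmin * (δ / L w))) ^ t) = (dF / (cmin * (δ / L w))) ^ t := by
          apply max_eq_right
          calc (1:ℝ) = 1 ^ t := (Real.one_rpow t).symm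
            _ ≤ _ := Real.rpow_le_rpow zero_le_one hge1 ht
        rw [hmaxeq, heq, Real.mul_rpow hbpos.le (hLpos w).le] at h1
        exact h1
      calc (coverNum F0 δ : ℝ) ≤ ∑ w : ι, (coverNum F0 (δ / L w) : ℝ) := by
            exact_mod_cast hrec
        _ ≤ ∑ w : ι, (dF / (cmin * δ)) ^ t * L w ^ t := Finset.sum_le_sum fun w _ => hstep w
        _ = (dF / (cmin * δ)) ^ t * ∑ w : ι, L w ^ t := by rw [Finset.mul_sum]
        _ = (dF / (cmin * δ)) ^ t := by rw [hsum, mul_one]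
        _ ≤ max 1 ((dF / (cmin * δ)) ^ t) := le_max_right _ _

end Helpers

/-- **Lemma 3.5.** The upper box dimension of the homogeneous attractor is bounded above by
the upper Lipschitz dimension: `dim̄_B F_∅ ≤ s`. -/
theorem upper_box_dim_homogeneous_attractor_le
    {X : Type*} [MetricSpace X] [CompactSpace X]
    {N : ℕ} (S : Fin N → X → X) (hS : ∀ i, IsBiLipContraction (S i))
    (F0 : Set X) (hF0c : IsCompact F0) (hF0ne : F0.Nonempty)
    (hF0 : F0 = ⋃ i, S i '' F0)
    (sk : ℕ → ℝ)
    (hsk : ∀ k, 1 ≤ k → ∑ w : Fin k → Fin N, LipPlus (compList S (List.ofFn w)) ^ sk k = 1)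
    (s : ℝ) (hs : Filter.Tendsto sk Filter.atTop (𝓝 s)) :
    ubDim F0 ≤ s := by
  classical
  -- N is positive
  rcases Nat.eq_zero_or_pos N with hN0 | hN
  · subst hN0
    rw [Set.iUnion_of_empty] at hF0
    exact absurd hF0 (by simpa using hF0ne.ne_empty)
  -- X has two distinct points
  obtain ⟨x₀, y₀, hxy⟩ : ∃ x y : X, x ≠ y := by
    by_contra h
    push_neg at h
    have hempty : {r : ℝ | ∃ x y : X, x ≠ y ∧
        r = dist (S ⟨0, hN⟩ x) (S ⟨0, hN⟩ y) / dist x y} = ∅ := by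
      ext r
      simp only [mem_setOf_eq, mem_empty_iff_false, iff_false]
      rintro ⟨x, y, hne, -⟩
      exact hne (h x y)
    have := (hS ⟨0, hN⟩).2.2.1
    rw [LipMinus, hempty, Real.sInf_empty] at this
    exact lt_irrefl 0 this
  -- the key estimate for each word length k ≥ 1
  have key : ∀ k : ℕ, 1 ≤ k → ubDim F0 ≤ sk k := by
    intro k hk
    set T : (Fin k → Fin N) → X → X := fun w => compList S (List.ofFn w) with hTdef
    set L : (Fin k → Fin N) → ℝ := fun w => LipPlus (T w) with hLdef
    have hub : ∀ w x y, dist (T w x) (T w y) ≤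
        (((List.ofFn w).map fun i => LipPlus (S i)).prod) * dist x y :=
      fun w => compList_dist_le' hS (List.ofFn w)
    have hL_ub : ∀ w x y, dist (T w x) (T w y) ≤ L w * dist x y :=
      fun w => dist_le_lipPlus_mul' (hub w)
    have hLpos : ∀ w, 0 < L w := fun w =>
      lt_of_lt_of_le (prodMinus_pos' hS (List.ofFn w))
        (le_lipPlus' (hub w) (compList_le_dist' hS (List.ofFn w)) hxy)
    have hofFn_ne : ∀ w : Fin k → Fin N, List.ofFn w ≠ [] := by
      intro w h
      have := congrArg List.length h
      simp only [List.length_ofFn, List.length_nil] at this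
      omega
    have hLlt1 : ∀ w, L w < 1 := fun w =>
      lt_of_le_of_lt (lipPlus_le' (prodPlus_pos' hS (List.ofFn w)).le (hub w))
        (prodPlus_lt_one' hS (List.ofFn w) (hofFn_ne w))
    have hsum : ∑ w : Fin k → Fin N, L w ^ sk k = 1 := hsk k hk
    have : Nonempty (Fin k → Fin N) := ⟨fun _ => ⟨0, hN⟩⟩
    have hANe : (Finset.univ : Finset (Fin k → Fin N)).Nonempty := Finset.univ_nonempty
    have ht0 : 0 ≤ sk k := by
      by_contra ht
      push_neg at ht
      have h2 : ∀ w : Fin k → Fin N, (1 : ℝ) < L w ^ sk k := by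
        intro w
        rw [Real.one_lt_rpow_iff_of_pos (hLpos w)]
        exact Or.inr ⟨hLlt1 w, ht⟩
      have h3 : ∑ w : Fin k → Fin N, (1 : ℝ) < ∑ w : Fin k → Fin N, L w ^ sk k :=
        Finset.sum_lt_sum_of_nonempty hANe fun w _ => h2 w
      rw [hsum, Finset.sum_const, nsmul_eq_mul, mul_one] at h3
      have h4 : (1 : ℝ) ≤ (Finset.univ : Finset (Fin k → Fin N)).card := by
        exact_mod_cast Finset.card_pos.2 hANe
      linarith
    -- min and max of L
    set cmin := Finset.univ.inf' hANe L with hcmindef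
    set rmax := Finset.univ.sup' hANe L with hrmaxdef
    have hcmin : ∀ w, cmin ≤ L w := fun w => Finset.inf'_le L (Finset.mem_univ w)
    have hrmaxle : ∀ w, L w ≤ rmax := fun w => Finset.le_sup' L (Finset.mem_univ w)
    have hcminpos : 0 < cmin := by
      obtain ⟨w, -, hw⟩ := Finset.exists_mem_eq_inf' hANe L
      rw [hcmindef, hw]
      exact hLpos w
    have hrmaxlt1 : rmax < 1 := by
      obtain ⟨w, -, hw⟩ := Finset.exists_mem_eq_sup' hANe L
      rw [hrmaxdef, hw]
      exact hLlt1 w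
    have hdec : F0 ⊆ ⋃ w : Fin k → Fin N, T w '' F0 := attractor_decomp' hF0 k
    -- conclude `ubDim F0 ≤ sk k`
    apply le_of_forall_pos_le_add
    intro ε hε
    have hIoo : ∀ c : ℝ, 0 < c → ∀ᶠ δ in 𝓝[>] (0:ℝ), δ ∈ Ioo 0 c := by
      intro c hc
      exact Ioo_mem_nhdsGT_of_mem ⟨le_refl 0, hc⟩
    have hcobdd : IsCoboundedUnder (· ≤ ·) (𝓝[>] (0:ℝ))
        (fun δ : ℝ => Real.log (coverNum F0 δ) / (-Real.log δ)) := by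
      apply isCoboundedUnder_le_of_eventually_le (𝓝[>] (0:ℝ)) (x := 0)
      filter_upwards [hIoo 1 one_pos] with δ hδ
      have h1 : (1 : ℝ) ≤ (coverNum F0 δ : ℝ) := by
        exact_mod_cast one_le_coverNum' hF0ne hδ.1
      exact div_nonneg (Real.log_nonneg h1) (by
        have := Real.log_neg hδ.1 hδ.2
        linarith)
    apply Filter.limsup_le_of_le hcobdd
    -- the eventual bound
    set dF := Metric.diam F0 with hdFdef
    rcases eq_or_lt_of_le (Metric.diam_nonneg (s := F0)) with hdF0 | hdFpos
    · -- degenerate case: diam F0 = 0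
      filter_upwards [hIoo 1 one_pos] with δ hδ
      have hle : coverNum F0 δ ≤ 1 := coverNum_le_one' (by rw [← hdF0]; exact hδ.1.le)
      have hge : 1 ≤ coverNum F0 δ := one_le_coverNum' hF0ne hδ.1
      have : coverNum F0 δ = 1 := le_antisymm hle hge
      rw [this]
      simp only [Nat.cast_one, Real.log_one, zero_div]
      linarith
    · -- main case: diam F0 > 0
      have hbound : ∀ δ : ℝ, 0 < δ → δ < dF →
          (coverNum F0 δ : ℝ) ≤ (dF / (cmin * δ)) ^ (sk k) := by
        intro δ hδ hδdF
        obtain ⟨n, hn⟩ := exists_pow_lt_of_lt_one (div_pos hδ hdFpos) hrmaxlt1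
        have hscale : rmax ^ n * dF ≤ δ := by
          rw [← le_div_iff₀ hdFpos]
          exact hn.le
        have h1 := main_claim' T L hLpos hL_ub hdec hcminpos hcmin hrmaxle ht0 hsum
          hdFpos n δ hδ hscale
        have hge1 : (1 : ℝ) ≤ dF / (cmin * δ) := by
          rw [le_div_iff₀ (mul_pos hcminpos hδ), one_mul]
          calc cmin * δ ≤ 1 * δ := by
                apply mul_le_mul_of_nonneg_right _ hδ.le
                exact le_of_lt (lt_of_le_of_lt (le_trans (hcmin (fun _ => ⟨0, hN⟩))
                  (hrmaxle (fun _ => ⟨0, hN⟩))) hrmaxlt1)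
            _ = δ := one_mul δ
            _ ≤ dF := hδdF.le
        rwa [max_eq_right (by
          calc (1:ℝ) = 1 ^ (sk k) := (Real.one_rpow _).symm
            _ ≤ _ := Real.rpow_le_rpow zero_le_one hge1 ht0)] at h1
      -- choose the eventual threshold
      set C := Real.log (dF / cmin) with hCdef
      set M := max 1 (|sk k * C| / ε) with hMdef
      have hMpos : 0 < M := lt_of_lt_of_le one_pos (le_max_left _ _)
      set δ₀ := min (min 1 dF) (Real.exp (-M)) with hδ₀def
      have hδ₀pos : 0 < δ₀ :=
        lt_min (lt_min one_pos hdFpos) (Real.exp_pos _)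
      filter_upwards [hIoo δ₀ hδ₀pos] with δ hδ
      have hδpos : 0 < δ := hδ.1
      have hδ1 : δ < 1 := lt_of_lt_of_le hδ.2 (le_trans (min_le_left _ _) (min_le_left _ _))
      have hδdF : δ < dF := lt_of_lt_of_le hδ.2 (le_trans (min_le_left _ _) (min_le_right _ _))
      have hδM : M ≤ -Real.log δ := by
        have h1 : δ ≤ Real.exp (-M) := le_of_lt (lt_of_lt_of_le hδ.2 (min_le_right _ _))
        have h2 : Real.log δ ≤ -M := by
          calc Real.log δ ≤ Real.log (Real.exp (-M)) :=
              (Real.log_le_log_iff hδpos (Real.exp_pos _)).2 h1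
            _ = -M := Real.log_exp _
        linarith
      have hy : 0 < -Real.log δ := lt_of_lt_of_le hMpos hδM
      have hN1 : (1 : ℝ) ≤ (coverNum F0 δ : ℝ) := by
        exact_mod_cast one_le_coverNum' hF0ne hδpos
      have hlog : Real.log (coverNum F0 δ) ≤ sk k * (C + (-Real.log δ)) := by
        calc Real.log (coverNum F0 δ)
            ≤ Real.log ((dF / (cmin * δ)) ^ (sk k)) := by
              exact (Real.log_le_log_iff (lt_of_lt_of_le one_pos hN1)
                (Real.rpow_pos_of_pos (div_pos hdFpos (mul_pos hcminpos hδpos)) _)).2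
                (hbound δ hδpos hδdF)
          _ = sk k * Real.log (dF / (cmin * δ)) :=
              Real.log_rpow (div_pos hdFpos (mul_pos hcminpos hδpos)) _
          _ = sk k * (C + (-Real.log δ)) := by
              rw [hCdef]
              congr 1
              rw [show dF / (cmin * δ) = (dF / cmin) / δ by rw [div_div]]
              rw [Real.log_div (div_pos hdFpos hcminpos).ne' hδpos.ne']
              ring
      calc Real.log (coverNum F0 δ) / (-Real.log δ)
          ≤ sk k * (C + (-Real.log δ)) / (-Real.log δ) := by gcongr
        _ = sk k + sk k * C / (-Real.log δ) := by
            have hyne : -Real.log δ ≠ 0 := hy.ne'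
            rw [mul_add, add_div, mul_div_assoc, mul_div_assoc, div_self hyne, mul_one, add_comm]
        _ ≤ sk k + ε := by
            have h5 : sk k * C / (-Real.log δ) ≤ ε := by
              rw [div_le_iff₀ hy]
              calc sk k * C ≤ |sk k * C| := le_abs_self _
                _ ≤ ε * M := by
                    have heq2 : ε * (|sk k * C| / ε) = |sk k * C| := by
                      rw [mul_comm ε (|sk k * C| / ε), div_mul_cancel₀ _ hε.ne']
                    rw [← heq2]
                    exact mul_le_mul_of_nonneg_left (le_max_right _ _) hε.le
                _ ≤ ε * (-Real.log δ) := mul_le_mul_of_nonneg_left hδM hε.le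
            linarith
  -- conclude using the limit
  exact ge_of_tendsto hs (eventually_atTop.2 ⟨1, fun k hk => key k hk⟩)
end

section
/- Let (X,d) be a compact metric space, 𝕀 = {S_1,...,S_N} an IFS of contractions on X and C ⊆ X compact with ℋ^s(C) < ∞ for some s ≥ 0. Then for all K ∈ ℕ and all integers 1 ≤ a, b ≤ K: ℋ^s(⋃_{n=0}^∞ ⋃_{𝐢∈I^{a+nK}} S_𝐢(C)) < ∞ if and only if ℋ^s(⋃_{n=0}^∞ ⋃_{𝐢∈I^{b+nK}} S_𝐢(C)) < ∞. -/
open Metric Filter Set MeasureTheory Topology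
open scoped ENNReal NNReal

/-- `S` is a contraction: Lipschitz with some constant `c < 1`. -/
def IsContractionMap {X : Type*} [MetricSpace X] (S : X → X) : Prop :=
  ∃ c : ℝ, 0 ≤ c ∧ c < 1 ∧ ∀ x y : X, dist (S x) (S y) ≤ c * dist x y

section Aux

variable {X : Type*} [MetricSpace X] {N : ℕ} (S : Fin N → X → X)

lemma compList_lipschitz (hS : ∀ i, LipschitzWith 1 (S i)) (l : List (Fin N)) :
    LipschitzWith 1 (compList S l) := by
  induction l with
  | nil => exact LipschitzWith.id
  | cons i l ih => simpa [compList] using (hS i).comp ih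

lemma lipschitzWith_one_of_contraction {S : X → X} (h : IsContractionMap S) :
    LipschitzWith 1 S := by
  obtain ⟨c, hc0, hc1, h⟩ := h
  refine LipschitzWith.of_dist_le_mul fun x y => (h x y).trans ?_
  rw [NNReal.coe_one, one_mul]
  have := dist_nonneg (x := x) (y := y)
  nlinarith

variable [MeasurableSpace X] [BorelSpace X]

lemma image_hausdorff_le (hS : ∀ i, LipschitzWith 1 (S i)) {s : ℝ} (hs0 : 0 ≤ s)
    (l : List (Fin N)) (E : Set X) : μH[s] (compList S l '' E) ≤ μH[s] E := by
  simpa using (compList_lipschitz S hS l).hausdorffMeasure_image_le hs0 E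

lemma finite_iUnion_lt_top {ι : Type*} [Fintype ι] (f : ι → Set X) {s : ℝ} {M : ℝ≥0∞}
    (hM : M ≠ ⊤) (h : ∀ i, μH[s] (f i) ≤ M) : μH[s] (⋃ i, f i) < ⊤ := by
  calc μH[s] (⋃ i, f i) ≤ ∑' i, μH[s] (f i) := measure_iUnion_le _
    _ = ∑ i, μH[s] (f i) := tsum_fintype _
    _ < ⊤ := ENNReal.sum_lt_top.mpr fun i _ => lt_of_le_of_lt (h i) hM.lt_top

end Aux

section Words

variable {X : Type*} {N : ℕ} (S : Fin N → X → X) (C : Set X)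

lemma compList_append (l1 l2 : List (Fin N)) :
    compList S (l1 ++ l2) = compList S l1 ∘ compList S l2 := by
  induction l1 with
  | nil => rfl
  | cons i l ih => simp [compList, ih, Function.comp_assoc]

lemma ofFn_get_cast {α : Type*} (l : List α) (m : ℕ) (h : l.length = m) :
    List.ofFn (fun i : Fin m => l.get (Fin.cast h.symm i)) = l := by
  subst h; exact List.ofFn_get l

/-- Union over functions equals union over lists of given length. -/
lemma W_eq_V (m : ℕ) :
    (⋃ w : Fin m → Fin N, compList S (List.ofFn w) '' C)
      = ⋃ l : List (Fin N), ⋃ _ : l.length = m, compList S l '' C := by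
  apply Set.Subset.antisymm
  · refine iUnion_subset fun w => ?_
    exact subset_iUnion_of_subset (List.ofFn w)
      (subset_iUnion_of_subset (List.length_ofFn (f := w)) subset_rfl)
  · refine iUnion_subset fun l => iUnion_subset fun hlen => ?_
    refine subset_iUnion_of_subset (fun i : Fin m => l.get (Fin.cast hlen.symm i)) ?_
    rw [ofFn_get_cast l m hlen]

lemma V_add_subset (m d : ℕ) :
    (⋃ l : List (Fin N), ⋃ _ : l.length = m + d, compList S l '' C)
      ⊆ ⋃ v : Fin d → Fin N, compList S (List.ofFn v) ''
          (⋃ l : List (Fin N), ⋃ _ : l.length = m, compList S l '' C) := by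
  refine iUnion_subset fun l => iUnion_subset fun hlen => ?_
  have h1 : (l.take d).length = d := by simp [hlen]
  have h2 : (l.drop d).length = m := by simp [hlen]
  refine subset_trans ?_
    (subset_iUnion (fun v : Fin d → Fin N => compList S (List.ofFn v) ''
      (⋃ l : List (Fin N), ⋃ _ : l.length = m, compList S l '' C))
      (fun i : Fin d => (l.take d).get (Fin.cast h1.symm i)))
  rw [ofFn_get_cast (l.take d) d h1]
  intro x hx
  obtain ⟨y, hy, rfl⟩ := hx
  have hsplit : compList S l y = compList S (l.take d) (compList S (l.drop d) y) := by
    conv_lhs => rw [← List.take_append_drop d l]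
    rw [compList_append]; rfl
  rw [hsplit]
  exact ⟨compList S (l.drop d) y,
    mem_iUnion.2 ⟨l.drop d, mem_iUnion.2 ⟨h2, ⟨y, hy, rfl⟩⟩⟩, rfl⟩

end Words

/-- **Lemma 4.1.** If `ℋ^s(C) < ∞`, then for all `K ∈ ℕ` and `1 ≤ a, b ≤ K`,
`ℋ^s(⋃_{n≥0} ⋃_{𝐢 ∈ I^{a+nK}} S_𝐢(C)) < ∞ ↔ ℋ^s(⋃_{n≥0} ⋃_{𝐢 ∈ I^{b+nK}} S_𝐢(C)) < ∞`. -/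
theorem hausdorff_measure_residue_classes_finite_iff
    {X : Type*} [MetricSpace X] [CompactSpace X] [MeasurableSpace X] [BorelSpace X]
    {N : ℕ} (S : Fin N → X → X) (hS : ∀ i, IsContractionMap (S i))
    (C : Set X) (hCc : IsCompact C)
    (s : ℝ) (hs0 : 0 ≤ s) (hsC : μH[s] C < ⊤) :
    ∀ K : ℕ, ∀ a b : ℕ, 1 ≤ a → a ≤ K → 1 ≤ b → b ≤ K →
      (μH[s] (⋃ n : ℕ, ⋃ w : Fin (a + n * K) → Fin N, compList S (List.ofFn w) '' C) < ⊤ ↔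
        μH[s] (⋃ n : ℕ, ⋃ w : Fin (b + n * K) → Fin N, compList S (List.ofFn w) '' C) < ⊤) := by
  have hlip : ∀ i, LipschitzWith 1 (S i) := fun i => lipschitzWith_one_of_contraction (hS i)
  set V : ℕ → Set X := fun m => ⋃ l : List (Fin N), ⋃ _ : l.length = m, compList S l '' C with hV
  -- each V m has finite measure
  have hVfin : ∀ m, μH[s] (V m) < ⊤ := by
    intro m
    rw [hV]
    simp only
    rw [← W_eq_V S C m]
    exact finite_iUnion_lt_top _ hsC.ne
      (fun w => image_hausdorff_le S hlip hs0 _ C)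
  -- key monotonicity step
  have key : ∀ (K a d : ℕ), μH[s] (⋃ n : ℕ, V (a + n * K)) < ⊤ →
      μH[s] (⋃ n : ℕ, V (a + d + n * K)) < ⊤ := by
    intro K a d hfin
    set T : Set X := ⋃ n : ℕ, V (a + n * K) with hT
    have hsub : (⋃ n : ℕ, V (a + d + n * K)) ⊆
        ⋃ v : Fin d → Fin N, compList S (List.ofFn v) '' T := by
      refine iUnion_subset fun n => ?_
      have harith : a + d + n * K = (a + n * K) + d := by omega
      rw [harith]
      refine (V_add_subset S C (a + n * K) d).trans ?_
      exact iUnion_mono fun v => image_mono (subset_iUnion (fun n => V (a + n * K)) n)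
    refine lt_of_le_of_lt (measure_mono hsub) ?_
    exact finite_iUnion_lt_top _ hfin.ne
      (fun v => by
        simpa using (compList_lipschitz S hlip (List.ofFn v)).hausdorffMeasure_image_le hs0 T)
  -- one direction, generic
  have main : ∀ (K a b : ℕ), 1 ≤ a → a ≤ K → 1 ≤ b → b ≤ K →
      μH[s] (⋃ n : ℕ, V (a + n * K)) < ⊤ → μH[s] (⋃ n : ℕ, V (b + n * K)) < ⊤ := by
    intro K a b ha1 haK hb1 hbK hfin
    have hsub : (⋃ n : ℕ, V (b + n * K)) ⊆ V b ∪ ⋃ n : ℕ, V (b + K + n * K) := by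
      refine iUnion_subset fun n => ?_
      match n with
      | 0 => simpa using subset_union_left
      | Nat.succ n =>
        have : b + (n + 1) * K = b + K + n * K := by ring
        rw [this]
        exact (subset_iUnion (fun n => V (b + K + n * K)) n).trans subset_union_right
    refine lt_of_le_of_lt (measure_mono hsub) ?_
    refine lt_of_le_of_lt (measure_union_le _ _) ?_
    have h2 : μH[s] (⋃ n : ℕ, V (b + K + n * K)) < ⊤ := by
      have harith : b + K = a + (b + K - a) := by omega
      rw [harith]
      exact key K a (b + K - a) hfin
    exact ENNReal.add_lt_top.2 ⟨hVfin b, h2⟩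
  intro K a b ha1 haK hb1 hbK
  have hrw : ∀ m : ℕ, (⋃ n : ℕ, ⋃ w : Fin (m + n * K) → Fin N,
      compList S (List.ofFn w) '' C) = ⋃ n : ℕ, V (m + n * K) := by
    intro m
    exact iUnion_congr fun n => W_eq_V S C (m + n * K)
  rw [hrw a, hrw b]
  exact ⟨main K a b ha1 haK hb1 hbK, main K b a hb1 hbK ha1 haK⟩
end
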